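/- Let m ≥ 1 and let s_1, ..., s_{m+1} be real-valued random variables on a probability space whose joint distribution is exchangeable. Let v_1, ..., v_{m+1} be fixed real numbers whose distinct values arranged increasingly are ṽ_1 < ... < ṽ_k with multiplicities n_1, ..., n_k, let E_v be the event that the multiset {s_1,...,s_{m+1}} equals {v_1,...,v_{m+1}}, and suppose P(E_v) > 0. Define p = (1 + #{j ∈ {1,...,m} : s_j ≤ s_{m+1}})/(m+1). Then for every i ∈ {1,...,k} and every t with (Σ_{l=1}^{i-1} n_l)/(m+1) ≤ t < (Σ_{l=1}^{i} n_l)/(m+1), the conditional probability P(p ≤ t | E_v) = (Σ_{l=1}^{i-1} n_l)/(m+1), and in particular P(p ≤ t | E_v) ≤ t. -/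

import Mathlib

open MeasureTheory ProbabilityTheory
open scoped ENNReal

lemma multiset_eq_iff_exists_perm {n : ℕ} (x v : Fin n → ℝ) :
    Multiset.map x Finset.univ.val = Multiset.map v Finset.univ.val ↔
      ∃ σ : Equiv.Perm (Fin n), x = v ∘ σ := by
  constructor
  · intro h
    rw [show Multiset.map x Finset.univ.val = Finset.univ.val.map x from rfl,
      Fin.univ_val_map, show Multiset.map v Finset.univ.val = Finset.univ.val.map v from rfl,
      Fin.univ_val_map, Multiset.coe_eq_coe] at h
    have h1 : x ∘ Tuple.sort x = v ∘ Tuple.sort v := by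
      apply List.ofFn_injective
      exact List.Perm.eq_of_sortedLE
        ((Tuple.monotone_sort x).sortedLE_ofFn) ((Tuple.monotone_sort v).sortedLE_ofFn)
        (((Tuple.sort x).ofFn_comp_perm x).trans (h.trans ((Tuple.sort v).ofFn_comp_perm v).symm))
    refine ⟨(Tuple.sort x).symm.trans (Tuple.sort v), ?_⟩
    funext j
    simpa using congrFun h1 ((Tuple.sort x).symm j)
  · rintro ⟨σ, rfl⟩
    rw [show Multiset.map (v ∘ σ) Finset.univ.val = Finset.univ.val.map (v ∘ σ) from rfl,
      Fin.univ_val_map, show Multiset.map v Finset.univ.val = Finset.univ.val.map v from rfl,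
      Fin.univ_val_map, Multiset.coe_eq_coe]
    exact σ.ofFn_comp_perm v

lemma multiset_perm_invariant {n : ℕ} (x : Fin n → ℝ) (σ : Equiv.Perm (Fin n)) :
    Multiset.map (x ∘ σ) Finset.univ.val = Multiset.map x Finset.univ.val :=
  (multiset_eq_iff_exists_perm _ _).mpr ⟨σ, rfl⟩

lemma card_filter_congr {n : ℕ} (x v : Fin n → ℝ)
    (h : Multiset.map x Finset.univ.val = Multiset.map v Finset.univ.val)
    (q : ℝ → Prop) [DecidablePred q] :
    (Finset.univ.filter (fun j => q (x j))).card = (Finset.univ.filter (fun j => q (v j))).card := by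
  have key : ∀ f : Fin n → ℝ, (Finset.univ.filter (fun j => q (f j))).card
      = Multiset.countP q (Multiset.map f Finset.univ.val) := by
    intro f
    rw [Multiset.countP_map]
    simp [Finset.card, Finset.filter_val]
  rw [key, key, h]

lemma card_filter_general {n k : ℕ} (v : Fin n → ℝ) (vt : Fin k → ℝ)
    (hinj : Function.Injective vt)
    (hrange : Set.range v = Set.range vt) (nl : Fin k → ℕ)
    (hnl : ∀ l, nl l = (Finset.univ.filter (fun j => v j = vt l)).card)
    (q : ℝ → Prop) [DecidablePred q] (F : Finset (Fin k))
    (hq : ∀ l, q (vt l) ↔ l ∈ F) :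
    (Finset.univ.filter (fun j => q (v j))).card = ∑ l ∈ F, nl l := by
  have key : Finset.univ.filter (fun j => q (v j))
      = F.biUnion (fun l => Finset.univ.filter (fun j => v j = vt l)) := by
    ext j
    simp only [Finset.mem_filter, Finset.mem_univ, true_and, Finset.mem_biUnion]
    constructor
    · intro hqj
      obtain ⟨l, hl⟩ : ∃ l, vt l = v j := by
        have : v j ∈ Set.range vt := hrange ▸ Set.mem_range_self j
        exact this
      exact ⟨l, (hq l).1 (hl ▸ hqj), hl.symm⟩
    · rintro ⟨l, hlF, hjl⟩
      rw [hjl]; exact (hq l).2 hlF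
  rw [key, Finset.card_biUnion]
  · exact Finset.sum_congr rfl fun l _ => (hnl l).symm
  · intro a _ b _ hab
    rw [Function.onFun, Finset.disjoint_left]
    intro j hja hjb
    simp only [Finset.mem_filter] at hja hjb
    exact hab (hinj (hja.2.symm.trans hjb.2))

/-- conditional distribution computation in the proof of Proposition 1.
Conditionally on the event `E_v` fixing the multiset of exchangeable score values (with
distinct values `ṽ_1 < ... < ṽ_k` of multiplicities `nl`), for every `i` and every `t` with
`(∑_{l<i} nl l)/(m+1) ≤ t < (∑_{l≤i} nl l)/(m+1)`, the conformal p-value `p` satisfies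
`P(p ≤ t | E_v) = (∑_{l<i} nl l)/(m+1) ≤ t`. -/
theorem conditional_pvalue_cdf
    {Ω : Type*} [MeasurableSpace Ω] (P : Measure Ω) [IsProbabilityMeasure P]
    (m : ℕ) (hm : 1 ≤ m)
    (s : Fin (m + 1) → Ω → ℝ)
    (hmeas : ∀ i, Measurable (s i))
    (hexch : ∀ σ : Equiv.Perm (Fin (m + 1)),
      Measure.map (fun ω i => s (σ i) ω) P = Measure.map (fun ω i => s i ω) P)
    (v : Fin (m + 1) → ℝ)
    (k : ℕ) (hk : 1 ≤ k) (vt : Fin k → ℝ) (hmono : StrictMono vt)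
    (hrange : Set.range v = Set.range vt)
    (nl : Fin k → ℕ)
    (hnl : ∀ l, nl l = (Finset.univ.filter (fun j : Fin (m + 1) => v j = vt l)).card)
    (hsum : ∑ l, nl l = m + 1)
    (E : Set Ω)
    (hE : E = {ω | Multiset.map (fun j => s j ω) Finset.univ.val
                    = Multiset.map v Finset.univ.val})
    (hpos : 0 < P E)
    (p : Ω → ℝ)
    (hp : ∀ ω, p ω =
      (((Finset.univ.filter
          (fun j : Fin m => s j.castSucc ω ≤ s (Fin.last m) ω)).card : ℝ) + 1) / (m + 1))
    (i : Fin k) (t : ℝ)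
    (ht1 : ((∑ l ∈ Finset.Iio i, nl l : ℕ) : ℝ) / (m + 1) ≤ t)
    (ht2 : t < ((∑ l ∈ Finset.Iic i, nl l : ℕ) : ℝ) / (m + 1)) :
    P[|E] {ω | p ω ≤ t}
        = ENNReal.ofReal (((∑ l ∈ Finset.Iio i, nl l : ℕ) : ℝ) / (m + 1)) ∧
      P[|E] {ω | p ω ≤ t} ≤ ENNReal.ofReal t := by
  classical
  set c : ℝ := vt i with hc
  set N : ℕ := ∑ l ∈ Finset.Iio i, nl l with hN
  set S : Ω → (Fin (m + 1) → ℝ) := fun ω j => s j ω with hSdef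
  have hSmeas : Measurable S := measurable_pi_lambda _ hmeas
  set A : Set (Fin (m + 1) → ℝ) :=
    {x | Multiset.map x Finset.univ.val = Multiset.map v Finset.univ.val} with hAdef
  have hEA : E = S ⁻¹' A := by rw [hE]; rfl
  have hAmeas : MeasurableSet A := by
    have hAeq : A = ⋃ σ : Equiv.Perm (Fin (m + 1)), {v ∘ σ} := by
      ext x
      simp only [Set.mem_iUnion, Set.mem_singleton_iff, hAdef, Set.mem_setOf_eq]
      exact multiset_eq_iff_exists_perm x v
    rw [hAeq]
    exact MeasurableSet.iUnion fun σ => measurableSet_singleton _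
  have hEmeas : MeasurableSet E := hEA ▸ hSmeas hAmeas
  have hvtinj : Function.Injective vt := hmono.injective
  -- counting facts about v
  have fact1 : (Finset.univ.filter (fun j => v j < c)).card = N := by
    rw [hN]
    exact card_filter_general v vt hvtinj hrange nl hnl (fun r => r < c) (Finset.Iio i)
      (fun l => by simp [hc, hmono.lt_iff_lt])
  have fact2 : ∀ l : Fin k, (Finset.univ.filter (fun j => v j ≤ vt l)).card
      = ∑ l' ∈ Finset.Iic l, nl l' :=
    fun l => card_filter_general v vt hvtinj hrange nl hnl (fun r => r ≤ vt l) (Finset.Iic l)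
      (fun l' => by simp [hmono.le_iff_le])
  set B : Set (Fin (m + 1) → ℝ) := {x | x (Fin.last m) < c} ∩ A with hBdef
  have hBmeas : MeasurableSet B :=
    ((measurable_pi_apply (Fin.last m)) measurableSet_Iio).inter hAmeas
  have hBrmeas : ∀ r : Fin (m + 1), MeasurableSet ({x : Fin (m + 1) → ℝ | x r < c} ∩ A) :=
    fun r => ((measurable_pi_apply r) measurableSet_Iio).inter hAmeas
  -- pointwise equivalence on E
  have piff : ∀ ω, Multiset.map (fun j => s j ω) Finset.univ.val
      = Multiset.map v Finset.univ.val → (p ω ≤ t ↔ s (Fin.last m) ω < c) := by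
    intro ω hωE
    set b := s (Fin.last m) ω with hb
    have hbv : ∃ j, v j = b := by
      have hbmem : b ∈ Multiset.map (fun j => s j ω) Finset.univ.val :=
        Multiset.mem_map.mpr ⟨Fin.last m, Finset.mem_univ (Fin.last m), hb.symm⟩
      rw [hωE] at hbmem
      obtain ⟨j, _, hj⟩ := Multiset.mem_map.mp hbmem
      exact ⟨j, hj⟩
    have hbr : b ∈ Set.range vt := by
      rw [← hrange]; obtain ⟨j, hj⟩ := hbv; exact ⟨j, hj⟩
    obtain ⟨l, hl⟩ := hbr
    have hsplit : (Finset.univ.filter (fun j : Fin (m + 1) => s j ω ≤ b)).card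
        = (Finset.univ.filter (fun j : Fin m => s j.castSucc ω ≤ b)).card + 1 := by
      calc (Finset.univ.filter (fun j : Fin (m + 1) => s j ω ≤ b)).card
          = ∑ j : Fin (m + 1), if s j ω ≤ b then 1 else 0 := by
            rw [Finset.sum_boole]; simp
        _ = (∑ j : Fin m, if s j.castSucc ω ≤ b then 1 else 0)
            + (if b ≤ b then 1 else 0) := Fin.sum_univ_castSucc _
        _ = (Finset.univ.filter (fun j : Fin m => s j.castSucc ω ≤ b)).card + 1 := by
            rw [Finset.sum_boole]; simp
    have hcc : (Finset.univ.filter (fun j : Fin (m + 1) => s j ω ≤ b)).card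
        = (Finset.univ.filter (fun j => v j ≤ b)).card :=
      card_filter_congr (fun j => s j ω) v hωE (fun x => x ≤ b)
    have hcard : (Finset.univ.filter (fun j : Fin m => s j.castSucc ω ≤ b)).card + 1
        = ∑ l' ∈ Finset.Iic l, nl l' := by
      rw [← hsplit, hcc, ← hl, fact2 l]
    have hpω : p ω = ((∑ l' ∈ Finset.Iic l, nl l' : ℕ) : ℝ) / (m + 1) := by
      rw [hp ω, ← hcard]
      push_cast
      ring
    have hmpos : (0 : ℝ) < (m : ℝ) + 1 := by positivity
    by_cases hli : l < i
    · have hblt : b < c := by rw [← hl, hc]; exact hmono hli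
      refine iff_of_true ?_ hblt
      rw [hpω]
      refine le_trans ?_ ht1
      gcongr
      exact_mod_cast Finset.sum_le_sum_of_subset
        (fun j hj => Finset.mem_Iio.mpr (lt_of_le_of_lt (Finset.mem_Iic.mp hj) hli))
    · have hbge : c ≤ b := by
        rw [← hl, hc]; exact hmono.monotone (le_of_not_gt hli)
      refine iff_of_false ?_ (not_lt.mpr hbge)
      rw [hpω]
      push_neg
      refine lt_of_lt_of_le ht2 ?_
      gcongr
      exact le_of_not_gt hli
  -- set identity
  have setid : E ∩ {ω | p ω ≤ t} = S ⁻¹' B := by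
    ext ω
    constructor
    · rintro ⟨hωE, hpt⟩
      have hωE' := hωE
      rw [hE] at hωE'
      have hωA : S ω ∈ A := by rw [hEA] at hωE; exact hωE
      exact ⟨(piff ω hωE').mp hpt, hωA⟩
    · rintro ⟨hlt, hωA⟩
      have hωE : ω ∈ E := by rw [hEA]; exact hωA
      have hωE' := hωE
      rw [hE] at hωE'
      exact ⟨hωE, (piff ω hωE').mpr hlt⟩
  -- exchangeability
  have exch : ∀ r : Fin (m + 1),
      P (S ⁻¹' ({x : Fin (m + 1) → ℝ | x r < c} ∩ A)) = P (S ⁻¹' B) := by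
    intro r
    set σ : Equiv.Perm (Fin (m + 1)) := Equiv.swap (Fin.last m) r with hσ
    have hmeasσ : Measurable (fun x : Fin (m + 1) → ℝ => x ∘ σ) :=
      measurable_pi_lambda _ fun j => measurable_pi_apply _
    have hmap : Measure.map (fun x : Fin (m + 1) → ℝ => x ∘ σ) (Measure.map S P)
        = Measure.map S P := by
      rw [Measure.map_map hmeasσ hSmeas]
      exact hexch σ
    have hpre : (fun x : Fin (m + 1) → ℝ => x ∘ σ) ⁻¹' B
        = {x : Fin (m + 1) → ℝ | x r < c} ∩ A := by
      ext x
      simp only [Set.mem_preimage, hBdef, Set.mem_inter_iff, Set.mem_setOf_eq,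
        Function.comp_apply]
      rw [show σ (Fin.last m) = r from Equiv.swap_apply_left _ _]
      have hAiff : (x ∘ σ) ∈ A ↔ x ∈ A := by
        simp only [hAdef, Set.mem_setOf_eq, multiset_perm_invariant x σ]
      rw [show ((x ∘ σ) ∈ A ↔ x ∈ A) from hAiff]
    calc P (S ⁻¹' ({x : Fin (m + 1) → ℝ | x r < c} ∩ A))
        = Measure.map S P ({x : Fin (m + 1) → ℝ | x r < c} ∩ A) :=
          (Measure.map_apply hSmeas (hBrmeas r)).symm
      _ = Measure.map S P ((fun x : Fin (m + 1) → ℝ => x ∘ σ) ⁻¹' B) := by rw [hpre]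
      _ = Measure.map (fun x : Fin (m + 1) → ℝ => x ∘ σ) (Measure.map S P) B :=
          (Measure.map_apply hmeasσ hBmeas).symm
      _ = Measure.map S P B := by rw [hmap]
      _ = P (S ⁻¹' B) := Measure.map_apply hSmeas hBmeas
  -- summation identity
  have sumid : ∀ ω, ∑ r : Fin (m + 1),
      (S ⁻¹' ({x : Fin (m + 1) → ℝ | x r < c} ∩ A)).indicator (fun _ => (1 : ℝ≥0∞)) ω
      = E.indicator (fun _ => (N : ℝ≥0∞)) ω := by
    intro ω
    by_cases hω : ω ∈ E
    · rw [Set.indicator_of_mem hω]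
      have hωA : S ω ∈ A := by rw [hEA] at hω; exact hω
      have step : ∀ r : Fin (m + 1),
          (S ⁻¹' ({x : Fin (m + 1) → ℝ | x r < c} ∩ A)).indicator (fun _ => (1 : ℝ≥0∞)) ω
          = if s r ω < c then 1 else 0 := by
        intro r
        by_cases h : s r ω < c
        · rw [Set.indicator_of_mem (Set.mem_preimage.mpr (Set.mem_inter (show S ω ∈ {x : Fin (m+1) → ℝ | x r < c} from h) hωA)), if_pos h]
        · rw [Set.indicator_of_notMem (fun hmem => h hmem.1), if_neg h]
      rw [Finset.sum_congr rfl fun r _ => step r, Finset.sum_boole]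
      have hcnt : (Finset.univ.filter (fun r : Fin (m + 1) => s r ω < c)).card
          = (Finset.univ.filter (fun j => v j < c)).card := by
        have hme : Multiset.map (fun j => s j ω) Finset.univ.val
            = Multiset.map v Finset.univ.val := by rw [hE] at hω; exact hω
        exact card_filter_congr (fun j => s j ω) v hme (fun x => x < c)
      rw [hcnt, fact1]
    · rw [Set.indicator_of_notMem hω]
      have hωA : S ω ∉ A := by rw [hEA] at hω; exact hω
      refine Finset.sum_eq_zero fun r _ => ?_
      exact Set.indicator_of_notMem (fun hmem => hωA hmem.2) _
  -- key identity
  have key : ((m : ℝ≥0∞) + 1) * P (S ⁻¹' B) = (N : ℝ≥0∞) * P E := by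
    have lhs : ∑ r : Fin (m + 1), P (S ⁻¹' ({x : Fin (m + 1) → ℝ | x r < c} ∩ A))
        = ((m : ℝ≥0∞) + 1) * P (S ⁻¹' B) := by
      rw [Finset.sum_congr rfl fun r _ => exch r, Finset.sum_const, Finset.card_univ,
        Fintype.card_fin, nsmul_eq_mul]
      push_cast
      ring
    have rhs : ∑ r : Fin (m + 1), P (S ⁻¹' ({x : Fin (m + 1) → ℝ | x r < c} ∩ A))
        = (N : ℝ≥0∞) * P E := by
      have h1 : ∀ r : Fin (m + 1), P (S ⁻¹' ({x : Fin (m + 1) → ℝ | x r < c} ∩ A))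
          = ∫⁻ ω, (S ⁻¹' ({x : Fin (m + 1) → ℝ | x r < c} ∩ A)).indicator
              (fun _ => (1 : ℝ≥0∞)) ω ∂P := by
        intro r
        exact (lintegral_indicator_one (hSmeas (hBrmeas r))).symm
      rw [Finset.sum_congr rfl fun r _ => h1 r,
        ← lintegral_finset_sum _ fun r _ =>
          measurable_const.indicator (hSmeas (hBrmeas r))]
      rw [lintegral_congr sumid, lintegral_indicator_const hEmeas]
    rw [← lhs, rhs]
  -- conclude
  have hPE_ne_top : P E ≠ ⊤ := measure_ne_top P E
  have hPE_ne : P E ≠ 0 := hpos.ne'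
  have hm1ne : ((m : ℝ≥0∞) + 1) ≠ 0 := by simp
  have hm1top : ((m : ℝ≥0∞) + 1) ≠ ⊤ := by simp
  have hq : P (S ⁻¹' B) = (N : ℝ≥0∞) * P E * ((m : ℝ≥0∞) + 1)⁻¹ := by
    have h2 := congrArg (fun z => ((m : ℝ≥0∞) + 1)⁻¹ * z) key
    simp only [← mul_assoc, ENNReal.inv_mul_cancel hm1ne hm1top, one_mul] at h2
    rw [h2]; ring
  have hmain : P[|E] {ω | p ω ≤ t} = (N : ℝ≥0∞) / ((m : ℝ≥0∞) + 1) := by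
    rw [cond_apply hEmeas, setid, hq]
    calc (P E)⁻¹ * ((N : ℝ≥0∞) * P E * ((m : ℝ≥0∞) + 1)⁻¹)
        = (N : ℝ≥0∞) * ((m : ℝ≥0∞) + 1)⁻¹ * ((P E)⁻¹ * P E) := by ring
      _ = (N : ℝ≥0∞) / ((m : ℝ≥0∞) + 1) := by
          rw [ENNReal.inv_mul_cancel hPE_ne hPE_ne_top, mul_one, div_eq_mul_inv]
  have hofReal : ENNReal.ofReal ((N : ℝ) / (m + 1)) = (N : ℝ≥0∞) / ((m : ℝ≥0∞) + 1) := by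
    rw [ENNReal.ofReal_div_of_pos (by positivity)]
    congr 1
    · exact ENNReal.ofReal_natCast N
    · rw [show ((m : ℝ) + 1) = ((m + 1 : ℕ) : ℝ) by push_cast; ring,
        ENNReal.ofReal_natCast]
      push_cast
      ring
  constructor
  · rw [hmain, hofReal]
  · rw [hmain, ← hofReal]
    exact ENNReal.ofReal_le_ofReal ht1
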